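/- Let g = k ⊕ p be a Lie algebra with [p,p] ⊆ k and let Φ: k → so(p) be the restriction of ad to p (a Lie algebra homomorphism on the ideal structure). If Φ_{[p,p]} commutes with the orthogonal complement (Φ_k)^⊥ in so(p) (with respect to the trace form −tr(AB)) and [p,p] is an ideal of k, then Φ_{[p,p]} is an ideal of the Lie algebra so(p). -/

import Mathlib

open scoped RealInnerProductSpace

lemma trace_eq_sum_inner' {W : Type*} [NormedAddCommGroup W] [InnerProductSpace ℝ W]
    [FiniteDimensional ℝ W] (f : W →ₗ[ℝ] W) :
    LinearMap.trace ℝ W f =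
      ∑ i, ⟪(stdOrthonormalBasis ℝ W) i, f ((stdOrthonormalBasis ℝ W) i)⟫ := by
  classical
  rw [LinearMap.trace_eq_matrix_trace ℝ (stdOrthonormalBasis ℝ W).toBasis f, Matrix.trace]
  refine Finset.sum_congr rfl fun i _ => ?_
  simp [Matrix.diag_apply, LinearMap.toMatrix_apply, OrthonormalBasis.coe_toBasis,
    OrthonormalBasis.coe_toBasis_repr_apply, OrthonormalBasis.repr_apply_apply,
    real_inner_comm]

lemma skew_trace_sq_eq_zero {W : Type*} [NormedAddCommGroup W] [InnerProductSpace ℝ W]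
    [FiniteDimensional ℝ W] (C : W →ₗ[ℝ] W) (hC : ∀ u v : W, ⟪C u, v⟫ = -⟪u, C v⟫)
    (h : LinearMap.trace ℝ W (C ∘ₗ C) = 0) : C = 0 := by
  have key : ∑ i, ‖C ((stdOrthonormalBasis ℝ W) i)‖ ^ 2 = 0 := by
    have := trace_eq_sum_inner' (C ∘ₗ C)
    rw [h] at this
    have : (0 : ℝ) = ∑ i, -⟪C ((stdOrthonormalBasis ℝ W) i), C ((stdOrthonormalBasis ℝ W) i)⟫ := by
      rw [this]
      refine Finset.sum_congr rfl fun i _ => ?_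
      rw [LinearMap.comp_apply, ← neg_eq_iff_eq_neg, ← hC]
    simpa [real_inner_self_eq_norm_sq] using this.symm
  have hz : ∀ i, C ((stdOrthonormalBasis ℝ W) i) = 0 := by
    intro i
    have := Finset.sum_eq_zero_iff_of_nonneg
      (fun i _ => by positivity : ∀ i ∈ Finset.univ,
        (0:ℝ) ≤ ‖C ((stdOrthonormalBasis ℝ W) i)‖ ^ 2) |>.mp key i (Finset.mem_univ i)
    have : ‖C ((stdOrthonormalBasis ℝ W) i)‖ = 0 := by
      nlinarith [norm_nonneg (C ((stdOrthonormalBasis ℝ W) i))]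
    simpa using this
  apply (stdOrthonormalBasis ℝ W).toBasis.ext
  intro i
  simpa using hz i

/-- Let `𝔨` be a real Lie algebra, `𝔦 ⊆ 𝔨` an ideal (playing the role of `[p,p]`), and
`Φ : 𝔨 → so(p)` a linear map sending brackets to commutators, with each `Φ X` skew-symmetric.
If every skew-symmetric endomorphism `B` orthogonal to `Φ(𝔨)` with respect to the trace form
`−tr(A∘B)` commutes with `Φ(𝔦)`, then `Φ(𝔦)` is an ideal of `so(p)`: the commutator of any
skew-symmetric endomorphism with an element of `Φ(𝔦)` lies in `Φ(𝔦)`. -/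
theorem stmt19 {𝔨 : Type*} [LieRing 𝔨] [LieAlgebra ℝ 𝔨]
    {W : Type*} [NormedAddCommGroup W] [InnerProductSpace ℝ W] [FiniteDimensional ℝ W]
    (Φ : 𝔨 →ₗ[ℝ] W →ₗ[ℝ] W)
    (hΦskew : ∀ (X : 𝔨) (u v : W), ⟪Φ X u, v⟫ = -⟪u, Φ X v⟫)
    (hΦlie : ∀ X Y : 𝔨, Φ ⁅X, Y⁆ = Φ X ∘ₗ Φ Y - Φ Y ∘ₗ Φ X)
    (𝔦 : LieIdeal ℝ 𝔨)
    (hcomm : ∀ B : W →ₗ[ℝ] W, (∀ u v : W, ⟪B u, v⟫ = -⟪u, B v⟫) →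
      (∀ X : 𝔨, -LinearMap.trace ℝ W (B ∘ₗ Φ X) = 0) →
      ∀ Y ∈ 𝔦, B ∘ₗ Φ Y = Φ Y ∘ₗ B) :
    ∀ A : W →ₗ[ℝ] W, (∀ u v : W, ⟪A u, v⟫ = -⟪u, A v⟫) →
      ∀ Y ∈ 𝔦, A ∘ₗ Φ Y - Φ Y ∘ₗ A ∈ Submodule.map Φ 𝔦.toSubmodule := by
  intro A hA Y hY
  -- the trace bilinear form  b C D = -tr(C ∘ D)
  set b : LinearMap.BilinForm ℝ (W →ₗ[ℝ] W) :=
    -((LinearMap.mul ℝ (Module.End ℝ W)).compr₂ (LinearMap.trace ℝ W)) with hb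
  have hbapp : ∀ C D : W →ₗ[ℝ] W, b C D = -LinearMap.trace ℝ W (C ∘ₗ D) := by
    intro C D; simp [hb, LinearMap.mul_apply']; rfl
  have hrefl : b.IsRefl := by
    intro C D h
    rw [hbapp] at h ⊢
    rw [show (D ∘ₗ C) = D * C from rfl, LinearMap.trace_mul_comm]
    exact h
  set U : Submodule ℝ (W →ₗ[ℝ] W) := LinearMap.range Φ with hU
  have hnd : (b.restrict U).Nondegenerate := by
    constructor
    all_goals
      rintro ⟨x, hx⟩ h
      obtain ⟨X, rfl⟩ := hx
      have := h ⟨Φ X, ⟨X, rfl⟩⟩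
      simp only [LinearMap.BilinForm.restrict_apply, LinearMap.domRestrict_apply] at this
      rw [hbapp] at this
      have : LinearMap.trace ℝ W (Φ X ∘ₗ Φ X) = 0 := by linarith
      have : Φ X = 0 := skew_trace_sq_eq_zero (Φ X) (hΦskew X) this
      exact Subtype.ext this
  have hcompl : IsCompl U (b.orthogonal U) :=
    b.isCompl_orthogonal_of_restrict_nondegenerate hrefl hnd
  have hAmem : A ∈ U ⊔ b.orthogonal U := by rw [hcompl.sup_eq_top]; trivial
  obtain ⟨u, hu, c, hc, hsum⟩ := Submodule.mem_sup.mp hAmem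
  obtain ⟨X, rfl⟩ := hu
  -- c is skew
  have hcskew : ∀ v w : W, ⟪c v, w⟫ = -⟪v, c w⟫ := by
    intro v w
    have hc' : c = A - Φ X := by rw [← hsum]; abel
    rw [hc']
    simp only [LinearMap.sub_apply, inner_sub_left, inner_sub_right, hA v w, hΦskew X v w]
    ring
  -- c is trace-orthogonal to Φ(𝔨)
  have hcorth : ∀ X' : 𝔨, -LinearMap.trace ℝ W (c ∘ₗ Φ X') = 0 := by
    intro X'
    have h2 : b (Φ X') c = 0 := hc (Φ X') ⟨X', rfl⟩
    rw [hbapp] at h2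
    rw [show (c ∘ₗ Φ X') = c * Φ X' from rfl, LinearMap.trace_mul_comm]
    exact h2
  have hccomm : c ∘ₗ Φ Y = Φ Y ∘ₗ c := hcomm c hcskew hcorth Y hY
  refine ⟨⁅X, Y⁆, 𝔦.lie_mem hY, ?_⟩
  rw [hΦlie X Y, ← hsum]
  ext v
  simp only [LinearMap.sub_apply, LinearMap.comp_apply, LinearMap.add_apply, map_add]
  have := congrFun (congrArg (fun f => f.toFun) hccomm) v
  rw [show c (Φ Y v) = Φ Y (c v) from this]
  abel
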